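/- Let q : ℝ → ℝ be four times continuously differentiable, satisfying the Painlevé II equation q''(x) = x·q(x) + 2 q(x)³ for all x ∈ ℝ, and assume the decay bounds |q(x)| ≤ C e^{−x} and |q'(x)| ≤ C e^{−x} for all x ≥ 0 (so the integrals below converge). Define g(u) := ∫_u^∞ (u − α) q(α)² dα, G₁(u) := ∫_u^∞ q'(α)² dα, G₂(u) := ∫_u^∞ q(α)⁴ dα, and h₄(u, v) := ½ ( g''(u) g'(v)² + g''(v) g'(u)² + g''(u) g''(v) ) + g'(u) ( 2 g(v) + G₁(v) − G₂(v) ) + g'(v) ( 2 g(u) + G₁(u) − G₂(u) ). Then for all (u, v) ∈ ℝ², (∂/∂u − ∂/∂v) ∂²h₄/∂u∂v = 2 ( g'''(u) g''(v)² − g'''(v) g''(u)² ) + g'''(u) g'''(v) ( g'(u) − g'(v) ) + g''''(u) g'(v) g''(v) − g''''(v) g'(u) g''(u) + ( g'''(u) g''(v) + g'''(v) g''(u) ) (u − v) + 2 ( g'''(u) g'(v) − g'''(v) g'(u) ). -/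

import Mathlib

open MeasureTheory

noncomputable section

/-- `∂/∂u` on functions of `(u,v)`. -/
def pd1 (f : ℝ × ℝ → ℝ) (p : ℝ × ℝ) : ℝ := deriv (fun u => f (u, p.2)) p.1

/-- `∂/∂v` on functions of `(u,v)`. -/
def pd2 (f : ℝ × ℝ → ℝ) (p : ℝ × ℝ) : ℝ := deriv (fun v => f (p.1, v)) p.2

/-- `g(u) := ∫_u^∞ (u − α) q(α)² dα`. -/
def gFun (q : ℝ → ℝ) (u : ℝ) : ℝ := ∫ α in Set.Ioi u, (u - α) * q α ^ 2

/-- `G₁(u) := ∫_u^∞ q'(α)² dα`. -/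
def G1Fun (q : ℝ → ℝ) (u : ℝ) : ℝ := ∫ α in Set.Ioi u, (deriv q α) ^ 2

/-- `G₂(u) := ∫_u^∞ q(α)⁴ dα`. -/
def G2Fun (q : ℝ → ℝ) (u : ℝ) : ℝ := ∫ α in Set.Ioi u, q α ^ 4

/-- The function `h₄(u,v)` of (6.14). -/
def h4Fun (q : ℝ → ℝ) (p : ℝ × ℝ) : ℝ :=
  (1 / 2) * (deriv (deriv (gFun q)) p.1 * (deriv (gFun q) p.2) ^ 2
      + deriv (deriv (gFun q)) p.2 * (deriv (gFun q) p.1) ^ 2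
      + deriv (deriv (gFun q)) p.1 * deriv (deriv (gFun q)) p.2)
    + deriv (gFun q) p.1 * (2 * gFun q p.2 + G1Fun q p.2 - G2Fun q p.2)
    + deriv (gFun q) p.2 * (2 * gFun q p.1 + G1Fun q p.1 - G2Fun q p.1)

/-! ### Auxiliary lemmas -/

open Set in
lemma my_integral_Ioi_sub_Ioi {f : ℝ → ℝ} {a b : ℝ} (ha : IntegrableOn f (Ioi a))
    (hb : IntegrableOn f (Ioi b)) :
    (∫ x in Ioi a, f x) - ∫ x in Ioi b, f x = ∫ x in a..b, f x := by
  wlog hab : a ≤ b generalizing a b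
  · rw [intervalIntegral.integral_symm, ← this hb ha (le_of_not_ge hab), neg_sub]
  rw [sub_eq_iff_eq_add, intervalIntegral.integral_of_le hab,
    ← setIntegral_union Ioc_disjoint_Ioi_same measurableSet_Ioi
      (ha.mono_set Ioc_subset_Ioi_self) hb, Ioc_union_Ioi_eq_Ioi hab]

open Set in
lemma my_tail_hasDerivAt {f : ℝ → ℝ} (hf : Continuous f)
    (hint : ∀ a : ℝ, IntegrableOn f (Ioi a)) (u : ℝ) :
    HasDerivAt (fun t => ∫ α in Ioi t, f α) (-f u) u := by
  have key : (fun t => ∫ α in Ioi t, f α)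
      = fun t => (∫ α in Ioi u, f α) - ∫ x in u..t, f x := by
    funext t
    have := my_integral_Ioi_sub_Ioi (hint u) (hint t)
    linarith
  rw [key]
  have h1 : HasDerivAt (fun t => ∫ x in u..t, f x) (f u) u :=
    intervalIntegral.integral_hasDerivAt_right
      (intervalIntegrable_iff.mpr ((hint _).mono_set Ioc_subset_Ioi_self))
      ⟨Set.univ, Filter.univ_mem, hf.aestronglyMeasurable.restrict⟩ hf.continuousAt
  simpa using (h1.const_sub (∫ α in Ioi u, f α))

open Set in
lemma my_integrableOn_decay {f : ℝ → ℝ} (hf : Continuous f) {D : ℝ}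
    (hD : ∀ x : ℝ, 0 ≤ x → |f x| ≤ D * Real.exp (-x)) (a : ℝ) :
    IntegrableOn f (Ioi a) := by
  have h1 : IntegrableOn f (Ioc a 0) :=
    hf.continuousOn.integrableOn_Icc.mono_set Ioc_subset_Icc_self
  have h2 : IntegrableOn f (Ioi 0) := by
    have hexp : IntegrableOn (fun x => D * Real.exp (-x)) (Ioi 0) := by
      have := (exp_neg_integrableOn_Ioi 0 (one_pos)).const_mul D
      simpa [IntegrableOn] using this
    refine Integrable.mono hexp hf.aestronglyMeasurable.restrict ?_
    filter_upwards [ae_restrict_mem measurableSet_Ioi] with x hx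
    have := hD x (le_of_lt hx)
    rw [Real.norm_eq_abs, Real.norm_eq_abs, abs_mul, abs_of_pos (Real.exp_pos _)]
    exact this.trans (mul_le_mul_of_nonneg_right (le_abs_self D) (Real.exp_pos _).le)
  exact (h1.union h2).mono_set Ioi_subset_Ioc_union_Ioi

lemma my_decay_sq {q : ℝ → ℝ} {C : ℝ} (h : ∀ x : ℝ, 0 ≤ x → |q x| ≤ C * Real.exp (-x)) :
    ∀ x : ℝ, 0 ≤ x → |q x ^ 2| ≤ C ^ 2 * Real.exp (-x) := by
  intro x hx
  have h1 := h x hx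
  have e1 : Real.exp (-x) ≤ 1 := Real.exp_le_one_iff.mpr (neg_nonpos.mpr hx)
  have e0 := Real.exp_pos (-x)
  rw [abs_pow]
  nlinarith [abs_nonneg (q x), sq_nonneg C, mul_nonneg (sq_nonneg C) e0.le]

lemma my_decay_pow4 {q : ℝ → ℝ} {C : ℝ} (h : ∀ x : ℝ, 0 ≤ x → |q x| ≤ C * Real.exp (-x)) :
    ∀ x : ℝ, 0 ≤ x → |q x ^ 4| ≤ C ^ 4 * Real.exp (-x) := by
  intro x hx
  have h1 := h x hx
  have e1 : Real.exp (-x) ≤ 1 := Real.exp_le_one_iff.mpr (neg_nonpos.mpr hx)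
  have e0 := Real.exp_pos (-x)
  have h2 : |q x| ^ 4 ≤ (C * Real.exp (-x)) ^ 4 := by
    exact pow_le_pow_left₀ (abs_nonneg _) h1 4
  have h3 : Real.exp (-x) ^ 4 ≤ Real.exp (-x) :=
    pow_le_of_le_one e0.le e1 (by norm_num)
  rw [abs_pow]
  calc |q x| ^ 4 ≤ (C * Real.exp (-x)) ^ 4 := h2
    _ = C ^ 4 * Real.exp (-x) ^ 4 := by ring
    _ ≤ C ^ 4 * Real.exp (-x) := by
        refine mul_le_mul_of_nonneg_left h3 ?_
        positivity

lemma my_decay_lin {q : ℝ → ℝ} {C : ℝ} (h : ∀ x : ℝ, 0 ≤ x → |q x| ≤ C * Real.exp (-x)) :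
    ∀ x : ℝ, 0 ≤ x → |x * q x ^ 2| ≤ C ^ 2 * Real.exp (-x) := by
  intro x hx
  have h1 := h x hx
  have e0 := Real.exp_pos (-x)
  have hxe : x * Real.exp (-x) ≤ 1 := by
    have hax : x ≤ Real.exp x := by linarith [Real.add_one_le_exp x]
    calc x * Real.exp (-x) ≤ Real.exp x * Real.exp (-x) :=
          mul_le_mul_of_nonneg_right hax (Real.exp_pos _).le
      _ = 1 := by rw [← Real.exp_add]; simp
  have hq2 : |q x| ^ 2 ≤ C ^ 2 * Real.exp (-x) ^ 2 := by
    nlinarith [abs_nonneg (q x)]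
  rw [abs_mul, abs_of_nonneg hx, abs_pow]
  calc x * |q x| ^ 2 ≤ x * (C ^ 2 * Real.exp (-x) ^ 2) := by
        exact mul_le_mul_of_nonneg_left hq2 hx
    _ = (x * Real.exp (-x)) * (C ^ 2 * Real.exp (-x)) := by ring
    _ ≤ 1 * (C ^ 2 * Real.exp (-x)) := by
        refine mul_le_mul_of_nonneg_right hxe ?_
        positivity
    _ = C ^ 2 * Real.exp (-x) := one_mul _

/-! ### Named components of the derivatives of `g` -/

def g1A (q : ℝ → ℝ) (u : ℝ) : ℝ := ∫ α in Set.Ioi u, q α ^ 2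
def gB (q : ℝ → ℝ) (u : ℝ) : ℝ := ∫ α in Set.Ioi u, α * q α ^ 2
def g2A (q : ℝ → ℝ) (u : ℝ) : ℝ := -(q u ^ 2)
def g3A (q : ℝ → ℝ) (u : ℝ) : ℝ := -(2 * q u * deriv q u)
def g4A (q : ℝ → ℝ) (u : ℝ) : ℝ :=
  -(2 * (deriv q u) ^ 2) - 2 * q u * (u * q u + 2 * q u ^ 3)
def phiA (q : ℝ → ℝ) (u : ℝ) : ℝ := 2 * gFun q u + G1Fun q u - G2Fun q u
def phiA' (q : ℝ → ℝ) (u : ℝ) : ℝ := 2 * g1A q u - (deriv q u) ^ 2 + q u ^ 4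
def psiA (q : ℝ → ℝ) (u : ℝ) : ℝ :=
  2 * g2A q u - 2 * deriv q u * (u * q u + 2 * q u ^ 3) + 4 * q u ^ 3 * deriv q u

def E2A (q : ℝ → ℝ) (a b : ℝ) : ℝ :=
  (1/2) * (g2A q a * (2 * g1A q b * g2A q b) + g3A q b * (g1A q a) ^ 2
      + g2A q a * g3A q b)
    + g1A q a * phiA' q b + g2A q b * phiA q a

def E12A (q : ℝ → ℝ) (a b : ℝ) : ℝ :=
  (1/2) * (g3A q a * (2 * g1A q b * g2A q b) + g3A q b * (2 * g1A q a * g2A q a)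
      + g3A q a * g3A q b)
    + g2A q a * phiA' q b + g2A q b * phiA' q a

def E112A (q : ℝ → ℝ) (a b : ℝ) : ℝ :=
  (1/2) * (g4A q a * (2 * g1A q b * g2A q b)
      + g3A q b * (2 * (g2A q a * g2A q a + g1A q a * g3A q a))
      + g4A q a * g3A q b)
    + g3A q a * phiA' q b + g2A q b * psiA q a

def E122A (q : ℝ → ℝ) (a b : ℝ) : ℝ :=
  (1/2) * (g3A q a * (2 * (g2A q b * g2A q b + g1A q b * g3A q b))
      + g4A q b * (2 * g1A q a * g2A q a)
      + g3A q a * g4A q b)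
    + g2A q a * psiA q b + g3A q b * phiA' q a

/-- **Equation (6.13).**  For a solution `q` of Painlevé II with exponential decay,
the explicit function `h₄` satisfies `L h₄ = ` the stated expression in the
derivatives of `g = log F₂`. -/
theorem h4_solves_inhomogeneous_L (q : ℝ → ℝ) (hq : ContDiff ℝ 4 q)
    (hPII : ∀ x : ℝ, deriv (deriv q) x = x * q x + 2 * q x ^ 3)
    (C : ℝ) (hdecay : ∀ x : ℝ, 0 ≤ x → |q x| ≤ C * Real.exp (-x) ∧
      |deriv q x| ≤ C * Real.exp (-x)) :
    ∀ u v : ℝ,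
      pd1 (pd1 (pd2 (h4Fun q))) (u, v) - pd2 (pd1 (pd2 (h4Fun q))) (u, v) =
        2 * (deriv (deriv (deriv (gFun q))) u * (deriv (deriv (gFun q)) v) ^ 2
            - deriv (deriv (deriv (gFun q))) v * (deriv (deriv (gFun q)) u) ^ 2)
        + deriv (deriv (deriv (gFun q))) u * deriv (deriv (deriv (gFun q))) v *
            (deriv (gFun q) u - deriv (gFun q) v)
        + deriv (deriv (deriv (deriv (gFun q)))) u * deriv (gFun q) v * deriv (deriv (gFun q)) v
        - deriv (deriv (deriv (deriv (gFun q)))) v * deriv (gFun q) u * deriv (deriv (gFun q)) u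
        + (deriv (deriv (deriv (gFun q))) u * deriv (deriv (gFun q)) v
            + deriv (deriv (deriv (gFun q))) v * deriv (deriv (gFun q)) u) * (u - v)
        + 2 * (deriv (deriv (deriv (gFun q))) u * deriv (gFun q) v
            - deriv (deriv (deriv (gFun q))) v * deriv (gFun q) u) := by
  -- basic regularity of q
  have hqc : Continuous q := hq.continuous
  have hqd : Differentiable ℝ q := hq.differentiable (by norm_num)
  have hq3 : ContDiff ℝ 3 (deriv q) := by
    have h4 : ContDiff ℝ ((3 : ℕ) + 1) q := by exact_mod_cast hq
    exact (contDiff_succ_iff_deriv.mp h4).2.2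
  have hq'd : Differentiable ℝ (deriv q) := hq3.differentiable (by norm_num)
  have hq'c : Continuous (deriv q) := hq'd.continuous
  -- decay
  have hdq : ∀ x : ℝ, 0 ≤ x → |q x| ≤ C * Real.exp (-x) := fun x hx => (hdecay x hx).1
  have hdq' : ∀ x : ℝ, 0 ≤ x → |deriv q x| ≤ C * Real.exp (-x) := fun x hx => (hdecay x hx).2
  -- integrability
  have int_q2 : ∀ a : ℝ, IntegrableOn (fun α => q α ^ 2) (Set.Ioi a) :=
    my_integrableOn_decay (hqc.pow 2) (my_decay_sq hdq)
  have int_q'2 : ∀ a : ℝ, IntegrableOn (fun α => (deriv q α) ^ 2) (Set.Ioi a) :=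
    my_integrableOn_decay (hq'c.pow 2) (my_decay_sq hdq')
  have int_q4 : ∀ a : ℝ, IntegrableOn (fun α => q α ^ 4) (Set.Ioi a) :=
    my_integrableOn_decay (hqc.pow 4) (my_decay_pow4 hdq)
  have int_aq2 : ∀ a : ℝ, IntegrableOn (fun α => α * q α ^ 2) (Set.Ioi a) :=
    my_integrableOn_decay (continuous_id.mul (hqc.pow 2)) (my_decay_lin hdq)
  -- g and its derivatives
  have hgEq : gFun q = fun t => t * g1A q t - gB q t := by
    funext t
    have h1 : ∀ α : ℝ, (t - α) * q α ^ 2 = t * q α ^ 2 - α * q α ^ 2 := by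
      intro α; ring
    rw [gFun]
    simp only [h1]
    rw [integral_sub ((int_q2 t).const_mul t) (int_aq2 t), integral_const_mul]
    rfl
  have hg1 : ∀ w : ℝ, HasDerivAt (gFun q) (g1A q w) w := by
    intro w
    have hA : HasDerivAt (g1A q) (-(q w ^ 2)) w := my_tail_hasDerivAt (hqc.pow 2) int_q2 w
    have hB : HasDerivAt (gB q) (-(w * q w ^ 2)) w :=
      my_tail_hasDerivAt (continuous_id.mul (hqc.pow 2)) int_aq2 w
    rw [hgEq]
    have h := ((hasDerivAt_id w).mul hA).sub hB
    refine h.congr_deriv ?_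
    simp only [id_eq]
    ring
  have hderiv1 : deriv (gFun q) = g1A q := funext fun w => (hg1 w).deriv
  have hg2 : ∀ w : ℝ, HasDerivAt (g1A q) (g2A q w) w := fun w =>
    my_tail_hasDerivAt (hqc.pow 2) int_q2 w
  have hderiv1' : deriv (g1A q) = g2A q := funext fun w => (hg2 w).deriv
  have hderiv2 : deriv (deriv (gFun q)) = g2A q := by
    rw [hderiv1]; exact hderiv1'
  have hg3 : ∀ w : ℝ, HasDerivAt (g2A q) (g3A q w) w := by
    intro w
    have h := ((hqd w).hasDerivAt.pow 2).neg
    refine h.congr_deriv ?_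
    simp only [g3A]
    ring
  have hderiv3 : deriv (deriv (deriv (gFun q))) = g3A q := by
    rw [hderiv2]; exact funext fun w => (hg3 w).deriv
  have hg4 : ∀ w : ℝ, HasDerivAt (g3A q) (g4A q w) w := by
    intro w
    have h := (((hqd w).hasDerivAt.const_mul 2).mul (hq'd w).hasDerivAt).neg
    refine h.congr_deriv ?_
    rw [hPII w]
    simp only [g4A]
    ring
  have hderiv4 : deriv (deriv (deriv (deriv (gFun q)))) = g4A q := by
    rw [hderiv3]; exact funext fun w => (hg4 w).deriv
  -- G1, G2, phi
  have hG1 : ∀ w : ℝ, HasDerivAt (G1Fun q) (-((deriv q w) ^ 2)) w := fun w =>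
    my_tail_hasDerivAt (hq'c.pow 2) int_q'2 w
  have hG2 : ∀ w : ℝ, HasDerivAt (G2Fun q) (-(q w ^ 4)) w := fun w =>
    my_tail_hasDerivAt (hqc.pow 4) int_q4 w
  have hphi : ∀ w : ℝ, HasDerivAt (phiA q) (phiA' q w) w := by
    intro w
    have h := (((hg1 w).const_mul 2).add (hG1 w)).sub (hG2 w)
    refine h.congr_deriv ?_
    simp only [phiA']
    ring
  have hphi' : ∀ w : ℝ, HasDerivAt (phiA' q) (psiA q w) w := by
    intro w
    have h := (((hg2 w).const_mul 2).sub ((hq'd w).hasDerivAt.pow 2)).add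
      ((hqd w).hasDerivAt.pow 4)
    refine h.congr_deriv ?_
    rw [hPII w]
    simp only [psiA, g2A]
    ring
  -- second partial in v
  have hpd2 : ∀ a b : ℝ, pd2 (h4Fun q) (a, b) = E2A q a b := by
    intro a b
    have hfun : (fun y => h4Fun q (a, y)) = fun y =>
        (1/2) * (g2A q a * (g1A q y) ^ 2 + g2A q y * (g1A q a) ^ 2 + g2A q a * g2A q y)
          + g1A q a * phiA q y + g1A q y * phiA q a := by
      funext y
      simp only [h4Fun, hderiv1, hderiv1', phiA]
    have hder : HasDerivAt (fun y =>
        (1/2) * (g2A q a * (g1A q y) ^ 2 + g2A q y * (g1A q a) ^ 2 + g2A q a * g2A q y)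
          + g1A q a * phiA q y + g1A q y * phiA q a) (E2A q a b) b := by
      have H := (((((hg2 b).pow 2).const_mul (g2A q a)).add
          ((hg3 b).mul_const ((g1A q a) ^ 2))).add
          ((hg3 b).const_mul (g2A q a))).const_mul (1/2) |>.add
          ((hphi b).const_mul (g1A q a)) |>.add ((hg2 b).mul_const (phiA q a))
      exact H.congr_deriv (by simp only [E2A]; ring)
    show deriv (fun y => h4Fun q (a, y)) b = E2A q a b
    rw [hfun]
    exact hder.deriv
  -- mixed partial
  have hpd12 : ∀ a b : ℝ, pd1 (pd2 (h4Fun q)) (a, b) = E12A q a b := by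
    intro a b
    have hfun : (fun x => pd2 (h4Fun q) (x, b)) = fun x => E2A q x b :=
      funext fun x => hpd2 x b
    have hder : HasDerivAt (fun x => E2A q x b) (E12A q a b) a := by
      have H := (((((hg3 a).mul_const (2 * g1A q b * g2A q b)).add
          (((hg2 a).pow 2).const_mul (g3A q b))).add
          ((hg3 a).mul_const (g3A q b))).const_mul (1/2) |>.add
          ((hg2 a).mul_const (phiA' q b))) |>.add ((hphi a).const_mul (g2A q b))
      have hE : (fun x => E2A q x b) = fun x =>
          (1/2) * (g2A q x * (2 * g1A q b * g2A q b) + g3A q b * (g1A q x) ^ 2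
            + g2A q x * g3A q b) + g1A q x * phiA' q b + g2A q b * phiA q x := by
        funext x; simp only [E2A]
      rw [hE]
      exact H.congr_deriv (by simp only [E12A]; ring)
    show deriv (fun x => pd2 (h4Fun q) (x, b)) a = E12A q a b
    rw [hfun]
    exact hder.deriv
  -- third partials
  have hpd112 : ∀ a b : ℝ, pd1 (pd1 (pd2 (h4Fun q))) (a, b) = E112A q a b := by
    intro a b
    have hfun : (fun x => pd1 (pd2 (h4Fun q)) (x, b)) = fun x => E12A q x b :=
      funext fun x => hpd12 x b
    have hder : HasDerivAt (fun x => E12A q x b) (E112A q a b) a := by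
      have H := (((((hg4 a).mul_const (2 * g1A q b * g2A q b)).add
          ((((hg2 a).mul (hg3 a)).const_mul 2).const_mul (g3A q b))).add
          ((hg4 a).mul_const (g3A q b))).const_mul (1/2) |>.add
          ((hg3 a).mul_const (phiA' q b))) |>.add ((hphi' a).const_mul (g2A q b))
      have hE : (fun x => E12A q x b) = fun x =>
          (1/2) * (g3A q x * (2 * g1A q b * g2A q b) + g3A q b * (2 * (g1A q x * g2A q x))
            + g3A q x * g3A q b) + g2A q x * phiA' q b + g2A q b * phiA' q x := by
        funext x; simp only [E12A]; ring
      rw [hE]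
      exact H.congr_deriv (by simp only [E112A])
    show deriv (fun x => pd1 (pd2 (h4Fun q)) (x, b)) a = E112A q a b
    rw [hfun]
    exact hder.deriv
  have hpd212 : ∀ a b : ℝ, pd2 (pd1 (pd2 (h4Fun q))) (a, b) = E122A q a b := by
    intro a b
    have hfun : (fun y => pd1 (pd2 (h4Fun q)) (a, y)) = fun y => E12A q a y :=
      funext fun y => hpd12 a y
    have hder : HasDerivAt (fun y => E12A q a y) (E122A q a b) b := by
      have H := ((((((hg2 b).mul (hg3 b)).const_mul 2).const_mul (g3A q a)).add
          ((hg4 b).mul_const (2 * g1A q a * g2A q a))).add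
          ((hg4 b).const_mul (g3A q a))).const_mul (1/2) |>.add
          ((hphi' b).const_mul (g2A q a)) |>.add ((hg3 b).mul_const (phiA' q a))
      have hE : (fun y => E12A q a y) = fun y =>
          (1/2) * (g3A q a * (2 * (g1A q y * g2A q y)) + g3A q y * (2 * g1A q a * g2A q a)
            + g3A q a * g3A q y) + g2A q a * phiA' q y + g2A q y * phiA' q a := by
        funext y; simp only [E12A]; ring
      rw [hE]
      exact H.congr_deriv (by simp only [E122A])
    show deriv (fun y => pd1 (pd2 (h4Fun q)) (a, y)) b = E122A q a b
    rw [hfun]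
    exact hder.deriv
  -- conclusion
  intro u v
  rw [hpd112 u v, hpd212 u v, hderiv4, hderiv3, hderiv2, hderiv1]
  simp only [E112A, E122A, g2A, g3A, g4A, phiA', psiA]
  ring

end
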